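/- Let A = {a_k} be a strictly increasing sequence of positive integers with a_k ~ 3^k. Then there does not exist a strictly increasing sequence of positive integers B = {b_n} with b_n ~ 2^n such that A is a subsequence of B. -/

import Mathlib

/-- No strictly increasing sequence of positive integers `b_n ~ 2^n` contains a strictly
increasing sequence `a_k ~ 3^k` as a subsequence. -/
theorem stmt11 (a : ℕ → ℕ) (ha : StrictMono a) (hapos : ∀ k, 0 < a k)
    (h1 : Filter.Tendsto (fun k : ℕ => (a k : ℝ) / 3 ^ k) Filter.atTop (nhds 1)) :
    ¬ ∃ b : ℕ → ℕ, StrictMono b ∧ (∀ n, 0 < b n) ∧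
      Filter.Tendsto (fun n : ℕ => (b n : ℝ) / 2 ^ n) Filter.atTop (nhds 1) ∧
      ∃ idx : ℕ → ℕ, StrictMono idx ∧ ∀ k, b (idx k) = a k := by
  rintro ⟨b, hb, hbpos, h2, idx, hidx, hbi⟩
  have hidxtop : Filter.Tendsto idx Filter.atTop Filter.atTop := hidx.tendsto_atTop
  have hA : Filter.Tendsto (fun k : ℕ => (a k : ℝ) / 2 ^ (idx k)) Filter.atTop (nhds 1) := by
    have := h2.comp hidxtop
    simpa [Function.comp_def, hbi] using this
  have hane : ∀ k, (a k : ℝ) ≠ 0 := fun k => Nat.cast_ne_zero.mpr (hapos k).ne'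
  have hinv : Filter.Tendsto (fun k : ℕ => (3 : ℝ) ^ k / (a k)) Filter.atTop (nhds 1) := by
    have := h1.inv₀ one_ne_zero
    simpa [inv_div] using this
  have hg : Filter.Tendsto (fun k : ℕ => (3 : ℝ) ^ k / 2 ^ (idx k)) Filter.atTop (nhds 1) := by
    have h := hA.mul hinv
    rw [mul_one] at h
    refine Filter.Tendsto.congr (fun k => ?_) h
    field_simp [hane k]
  have hg1 : Filter.Tendsto (fun k : ℕ => (3 : ℝ) ^ (k + 1) / 2 ^ (idx (k + 1)))
      Filter.atTop (nhds 1) := by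
    have := hg.comp (Filter.tendsto_add_atTop_nat 1)
    simpa [Function.comp_def] using this
  have hginv : Filter.Tendsto (fun k : ℕ => (2 : ℝ) ^ (idx k) / 3 ^ k)
      Filter.atTop (nhds 1) := by
    have := hg.inv₀ one_ne_zero
    simpa [inv_div] using this
  have hratio : Filter.Tendsto (fun k : ℕ => (2 : ℝ) ^ (idx (k + 1) - idx k))
      Filter.atTop (nhds 3) := by
    have h := hg1.mul hginv
    rw [mul_one] at h
    have h3 : Filter.Tendsto (fun k : ℕ => (3 : ℝ) /
        ((3 : ℝ) ^ (k + 1) / 2 ^ (idx (k + 1)) * ((2 : ℝ) ^ (idx k) / 3 ^ k)))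
        Filter.atTop (nhds 3) := by
      have := (tendsto_const_nhds (x := (3 : ℝ)) (f := Filter.atTop (α := ℕ))).div h one_ne_zero
      simpa [Pi.div_def] using this
    refine Filter.Tendsto.congr (fun k => ?_) h3
    have hlt : idx k ≤ idx (k + 1) := (hidx (Nat.lt_succ_self k)).le
    obtain ⟨d, hd⟩ : ∃ d, idx (k + 1) = idx k + d := ⟨_, (Nat.add_sub_cancel' hlt).symm⟩
    have hds : idx (k + 1) - idx k = d := by omega
    rw [hds, hd, pow_add, pow_succ]
    have h2i : (2 : ℝ) ^ (idx k) ≠ 0 := by positivity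
    have h3k : (3 : ℝ) ^ k ≠ 0 := by positivity
    have h2d : (2 : ℝ) ^ d ≠ 0 := by positivity
    field_simp
    ring
  have hev : ∀ᶠ k in Filter.atTop, |(2 : ℝ) ^ (idx (k + 1) - idx k) - 3| < 1 := by
    have := hratio.eventually (Metric.ball_mem_nhds (3 : ℝ) one_pos)
    simpa [Real.dist_eq] using this
  obtain ⟨k, hk⟩ := hev.exists
  set d := idx (k + 1) - idx k with hd
  have hd1 : 1 ≤ d := by
    have : idx k < idx (k + 1) := hidx (by omega)
    omega
  rcases eq_or_lt_of_le hd1 with h | h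
  · rw [← h] at hk
    norm_num at hk
  · have h4 : (4 : ℝ) ≤ (2 : ℝ) ^ d := by
      calc (4 : ℝ) = 2 ^ 2 := by norm_num
      _ ≤ 2 ^ d := pow_le_pow_right₀ (by norm_num) h
    rw [abs_sub_lt_iff] at hk
    linarith [hk.1]
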